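/- arXiv:1808.02084 — 3 statements merged into one kernel-verified Lean document; each statement's English description precedes it below -/
import Mathlib

section
/- Fix z ∈ ℝ and h > 0. Let φ(x) = (2π)^{-1/2} exp(-x²/2) be the standard normal density and k(x) = exp(-(x - z)²/h) the Gaussian kernel centered at z. Then the function x ↦ (d/dx)(k(x)·φ(x)) is integrable on ℝ and ∫_ℝ (d/dx)(k(x)·φ(x)) dx = 0; that is, the Gaussian kernel x ↦ exp(-(x-z)²/h) is in the Stein class of the standard normal distribution. -/
open MeasureTheory Filter

lemma gauss_deriv (z h : ℝ) (x : ℝ) :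
    HasDerivAt (fun x : ℝ =>
        Real.exp (-(x - z) ^ 2 / h) * ((2 * Real.pi) ^ (-(1 : ℝ) / 2) * Real.exp (-x ^ 2 / 2)))
      (Real.exp (-(x - z) ^ 2 / h) * ((2 * Real.pi) ^ (-(1 : ℝ) / 2) * Real.exp (-x ^ 2 / 2))
        * (-2 * (x - z) / h + -x)) x := by
  set c : ℝ := (2 * Real.pi) ^ (-(1 : ℝ) / 2)
  have h1 : HasDerivAt (fun x : ℝ => Real.exp (-(x - z) ^ 2 / h))
      (Real.exp (-(x - z) ^ 2 / h) * (-2 * (x - z) / h)) x := by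
    have hx : HasDerivAt (fun x : ℝ => -(x - z) ^ 2 / h) (-2 * (x - z) / h) x := by
      have : HasDerivAt (fun x : ℝ => (x - z) ^ 2) (2 * (x - z)) x := by
        simpa using ((hasDerivAt_id x).sub_const z).fun_pow 2
      simpa [neg_div, neg_mul] using (this.neg.div_const h)
    simpa using hx.exp
  have h2 : HasDerivAt (fun x : ℝ => c * Real.exp (-x ^ 2 / 2))
      (c * (Real.exp (-x ^ 2 / 2) * (-x))) x := by
    have hx : HasDerivAt (fun x : ℝ => -x ^ 2 / 2) (-x) x := by
      have : HasDerivAt (fun x : ℝ => x ^ 2) (2 * x) x := by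
        simpa using (hasDerivAt_id x).fun_pow 2
      have := this.neg.div_const 2
      simpa [neg_div] using this
    exact (hx.exp).const_mul c
  have := h1.fun_mul h2
  exact this.congr_deriv (by ring)

lemma gauss_integrable (z h : ℝ) (hh : 0 < h) :
    Integrable (fun x : ℝ =>
      Real.exp (-(x - z) ^ 2 / h) * ((2 * Real.pi) ^ (-(1 : ℝ) / 2) * Real.exp (-x ^ 2 / 2))
        * (-2 * (x - z) / h + -x)) (volume : Measure ℝ) := by
  set c : ℝ := (2 * Real.pi) ^ (-(1 : ℝ) / 2)
  have hc : 0 ≤ c := Real.rpow_nonneg (by positivity) _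
  have hexp : Integrable (fun x : ℝ => Real.exp (-(1/2 : ℝ) * x ^ 2)) :=
    integrable_exp_neg_mul_sq (by norm_num)
  have hxexp : Integrable (fun x : ℝ => x * Real.exp (-(1/2 : ℝ) * x ^ 2)) := by
    have := integrable_rpow_mul_exp_neg_mul_sq (b := (1/2 : ℝ)) (by norm_num)
      (s := 1) (by norm_num)
    simpa [Real.rpow_one] using this
  have hbound : Integrable (fun x : ℝ =>
      c * ((2 * (|x| + |z|) / h + |x|) * Real.exp (-(1/2 : ℝ) * x ^ 2))) := by
    apply Integrable.const_mul
    have : Integrable (fun x : ℝ =>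
        (2 / h) * (|x| * Real.exp (-(1/2 : ℝ) * x ^ 2))
        + (2 * |z| / h) * Real.exp (-(1/2 : ℝ) * x ^ 2)
        + |x| * Real.exp (-(1/2 : ℝ) * x ^ 2)) := by
      apply Integrable.add
      apply Integrable.add
      · exact (hxexp.abs.congr (by
          filter_upwards with x
          rw [abs_mul, abs_of_nonneg (Real.exp_pos _).le])).const_mul _
      · exact hexp.const_mul _
      · exact hxexp.abs.congr (by
          filter_upwards with x
          rw [abs_mul, abs_of_nonneg (Real.exp_pos _).le])
    apply this.congr
    filter_upwards with x
    ring
  apply hbound.mono'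
  · apply Continuous.aestronglyMeasurable
    fun_prop
  · filter_upwards with x
    rw [norm_mul]
    have h1 : ‖Real.exp (-(x - z) ^ 2 / h) * (c * Real.exp (-x ^ 2 / 2))‖
        ≤ c * Real.exp (-(1/2 : ℝ) * x ^ 2) := by
      rw [norm_mul, norm_mul]
      have e1 : ‖Real.exp (-(x - z) ^ 2 / h)‖ ≤ 1 := by
        rw [Real.norm_eq_abs, abs_of_nonneg (Real.exp_pos _).le]
        apply Real.exp_le_one_iff.2
        apply div_nonpos_of_nonpos_of_nonneg (neg_nonpos.mpr (by positivity)) hh.le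
      have e2 : ‖Real.exp (-x ^ 2 / 2)‖ = Real.exp (-(1/2 : ℝ) * x ^ 2) := by
        rw [Real.norm_eq_abs, abs_of_nonneg (Real.exp_pos _).le]
        congr 1; ring
      calc ‖Real.exp (-(x - z) ^ 2 / h)‖ * (‖c‖ * ‖Real.exp (-x ^ 2 / 2)‖)
          ≤ 1 * (‖c‖ * ‖Real.exp (-x ^ 2 / 2)‖) := by
            apply mul_le_mul_of_nonneg_right e1 (by positivity)
        _ = c * Real.exp (-(1/2 : ℝ) * x ^ 2) := by
            rw [one_mul, e2, Real.norm_eq_abs, abs_of_nonneg hc]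
    have h2 : ‖-2 * (x - z) / h + -x‖ ≤ 2 * (|x| + |z|) / h + |x| := by
      calc ‖-2 * (x - z) / h + -x‖ ≤ ‖-2 * (x - z) / h‖ + ‖-x‖ := norm_add_le _ _
        _ ≤ 2 * (|x| + |z|) / h + |x| := by
            rw [Real.norm_eq_abs, Real.norm_eq_abs, abs_neg, abs_div, abs_mul,
              abs_of_pos hh]
            gcongr
            · simp
            · exact (abs_sub x z).trans (le_refl _)
    calc ‖Real.exp (-(x - z) ^ 2 / h) * (c * Real.exp (-x ^ 2 / 2))‖
          * ‖-2 * (x - z) / h + -x‖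
        ≤ (c * Real.exp (-(1/2 : ℝ) * x ^ 2)) * (2 * (|x| + |z|) / h + |x|) := by
          apply mul_le_mul h1 h2 (norm_nonneg _) (by positivity)
      _ = c * ((2 * (|x| + |z|) / h + |x|) * Real.exp (-(1/2 : ℝ) * x ^ 2)) := by ring

lemma gauss_tendsto (z h : ℝ) (hh : 0 < h) (l : Filter ℝ)
    (hl : Tendsto (fun x : ℝ => -x ^ 2 / 2) l atBot) :
    Tendsto (fun x : ℝ =>
      Real.exp (-(x - z) ^ 2 / h) * ((2 * Real.pi) ^ (-(1 : ℝ) / 2) * Real.exp (-x ^ 2 / 2)))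
      l (nhds 0) := by
  set c : ℝ := (2 * Real.pi) ^ (-(1 : ℝ) / 2)
  have hc : 0 ≤ c := Real.rpow_nonneg (by positivity) _
  have hmain : Tendsto (fun x : ℝ => c * Real.exp (-x ^ 2 / 2)) l (nhds 0) := by
    have := (Real.tendsto_exp_atBot.comp hl).const_mul c
    simpa using this
  apply squeeze_zero (fun x => by positivity) _ hmain
  intro x
  have e1 : Real.exp (-(x - z) ^ 2 / h) ≤ 1 := by
    apply Real.exp_le_one_iff.2
    apply div_nonpos_of_nonpos_of_nonneg (neg_nonpos.mpr (by positivity)) hh.le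
  calc Real.exp (-(x - z) ^ 2 / h) * (c * Real.exp (-x ^ 2 / 2))
      ≤ 1 * (c * Real.exp (-x ^ 2 / 2)) :=
        mul_le_mul_of_nonneg_right e1 (by positivity)
    _ = c * Real.exp (-x ^ 2 / 2) := one_mul _

/-- The Gaussian kernel `x ↦ exp(-(x-z)²/h)` is in the Stein class of the
standard normal distribution: the derivative of the product of the kernel with
the standard normal density `φ(x) = (2π)^{-1/2} exp(-x²/2)` is integrable on `ℝ`
and has vanishing integral. -/
theorem gaussian_kernel_in_stein_class_of_normal (z : ℝ) (h : ℝ) (hh : 0 < h) :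
    Integrable
      (deriv (fun x : ℝ =>
        Real.exp (-(x - z) ^ 2 / h) * ((2 * Real.pi) ^ (-(1 : ℝ) / 2) * Real.exp (-x ^ 2 / 2))))
      (volume : Measure ℝ) ∧
    ∫ x : ℝ,
      deriv (fun x : ℝ =>
        Real.exp (-(x - z) ^ 2 / h) * ((2 * Real.pi) ^ (-(1 : ℝ) / 2) * Real.exp (-x ^ 2 / 2))) x
      = 0 := by
  have hderiv : deriv (fun x : ℝ =>
      Real.exp (-(x - z) ^ 2 / h) * ((2 * Real.pi) ^ (-(1 : ℝ) / 2) * Real.exp (-x ^ 2 / 2)))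
      = fun x =>
      Real.exp (-(x - z) ^ 2 / h) * ((2 * Real.pi) ^ (-(1 : ℝ) / 2) * Real.exp (-x ^ 2 / 2))
        * (-2 * (x - z) / h + -x) := by
    funext x
    exact (gauss_deriv z h x).deriv
  rw [hderiv]
  have hint := gauss_integrable z h hh
  refine ⟨hint, ?_⟩
  have hbot : Tendsto (fun x : ℝ => -x ^ 2 / 2) atBot atBot := by
    apply Tendsto.atBot_div_const (by norm_num)
    apply tendsto_neg_atBot_iff.2
    have : Tendsto (fun x : ℝ => (-x) ^ 2) atBot atTop :=
      (tendsto_pow_atTop two_ne_zero).comp tendsto_neg_atBot_atTop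
    simpa using this
  have htop : Tendsto (fun x : ℝ => -x ^ 2 / 2) atTop atBot := by
    apply Tendsto.atBot_div_const (by norm_num)
    apply tendsto_neg_atBot_iff.2
    exact tendsto_pow_atTop (by norm_num)
  have := integral_of_hasDerivAt_of_tendsto (gauss_deriv z h) hint
    (gauss_tendsto z h hh atBot hbot) (gauss_tendsto z h hh atTop htop)
  simpa using this
end

section
/- Let p, q : ℝᵈ → ℝ be differentiable probability densities with p(x) > 0 and q(x) > 0 for all x, and fix x̄ ∈ ℝᵈ. Let k(·, x̄) : ℝᵈ → ℝ be differentiable, and assume each partial derivative x ↦ ∂ᵢ(k(x, x̄) q(x)) is integrable with ∫_{ℝᵈ} ∇_x(k(x, x̄) q(x)) dx = 0, and that the relevant integrands below are integrable. Then E_{x∼q}[A_p k(x, x̄)] = ∫_{ℝᵈ} ((∇ log p)(x) k(x, x̄) + ∇_x k(x, x̄)) q(x) dx = ∫_{ℝᵈ} ((∇ log p)(x) − (∇ log q)(x)) k(x, x̄) q(x) dx, as an identity of vectors in ℝᵈ. -/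
open MeasureTheory

lemma gradient_apply_coord {d : ℕ} (F : EuclideanSpace ℝ (Fin d) → ℝ)
    (x : EuclideanSpace ℝ (Fin d)) (i : Fin d) :
    gradient F x i = fderiv ℝ F x (EuclideanSpace.single i 1) := by
  have h := InnerProductSpace.toDual_symm_apply (𝕜 := ℝ)
    (E := EuclideanSpace ℝ (Fin d)) (x := EuclideanSpace.single i 1) (y := fderiv ℝ F x)
  rw [gradient]
  rw [← h, EuclideanSpace.inner_single_right]
  simp

lemma gradient_log_comp {d : ℕ} (q : EuclideanSpace ℝ (Fin d) → ℝ)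
    (hq_diff : Differentiable ℝ q) (hq_pos : ∀ x, 0 < q x)
    (x : EuclideanSpace ℝ (Fin d)) :
    gradient (fun y => Real.log (q y)) x = (q x)⁻¹ • gradient q x := by
  have h : HasFDerivAt (fun y => Real.log (q y)) ((q x)⁻¹ • fderiv ℝ q x) x :=
    (Real.hasDerivAt_log (hq_pos x).ne').comp_hasFDerivAt x (hq_diff x).hasFDerivAt
  rw [gradient, h.fderiv, _root_.map_smul, gradient]

lemma gradient_mul {d : ℕ} (f g : EuclideanSpace ℝ (Fin d) → ℝ)
    (hf : Differentiable ℝ f) (hg : Differentiable ℝ g)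
    (x : EuclideanSpace ℝ (Fin d)) :
    gradient (fun y => f y * g y) x = f x • gradient g x + g x • gradient f x := by
  rw [gradient, fderiv_fun_mul (hf x) (hg x), map_add, _root_.map_smul, _root_.map_smul, gradient, gradient]

/-- If `p, q` are differentiable positive probability densities on `ℝᵈ` and, for the
fixed point `x̄`, the kernel section `x ↦ k x x̄` is differentiable and in the Stein
class of `q`, then (assuming the integrands are integrable)
`E_{x∼q}[A_p k(x, x̄)] = ∫ ((∇ log p) x • k x x̄ + ∇ₓ k x x̄) q x dx
                      = ∫ ((∇ log p) x − (∇ log q) x) k x x̄ q x dx`. -/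
theorem stein_operator_expectation_eq_score_difference {d : ℕ}
    (p q : EuclideanSpace ℝ (Fin d) → ℝ)
    (k : EuclideanSpace ℝ (Fin d) → EuclideanSpace ℝ (Fin d) → ℝ)
    (xb : EuclideanSpace ℝ (Fin d))
    (hp_diff : Differentiable ℝ p) (hp_pos : ∀ x, 0 < p x)
    (hp_int : Integrable p (volume : Measure (EuclideanSpace ℝ (Fin d))))
    (hp_one : ∫ x, p x = 1)
    (hq_diff : Differentiable ℝ q) (hq_pos : ∀ x, 0 < q x)
    (hq_int : Integrable q (volume : Measure (EuclideanSpace ℝ (Fin d))))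
    (hq_one : ∫ x, q x = 1)
    (hk_diff : Differentiable ℝ (fun x => k x xb))
    (hk_int : ∀ i : Fin d,
      Integrable (fun x => fderiv ℝ (fun y => k y xb * q y) x (EuclideanSpace.single i 1))
        (volume : Measure (EuclideanSpace ℝ (Fin d))))
    (hk_stein : ∀ i : Fin d,
      ∫ x, fderiv ℝ (fun y => k y xb * q y) x (EuclideanSpace.single i 1) = 0)
    (h_int1 : Integrable
      (fun x => q x • (k x xb • gradient (fun y => Real.log (p y)) x
        + gradient (fun y => k y xb) x))
      (volume : Measure (EuclideanSpace ℝ (Fin d))))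
    (h_int2 : Integrable
      (fun x => (k x xb * q x) •
        (gradient (fun y => Real.log (p y)) x - gradient (fun y => Real.log (q y)) x))
      (volume : Measure (EuclideanSpace ℝ (Fin d)))) :
    ∫ x, q x • (k x xb • gradient (fun y => Real.log (p y)) x
        + gradient (fun y => k y xb) x)
      = ∫ x, (k x xb * q x) •
          (gradient (fun y => Real.log (p y)) x - gradient (fun y => Real.log (q y)) x) := by
  set F : EuclideanSpace ℝ (Fin d) → ℝ := fun y => k y xb * q y with hF
  have key : ∀ x, q x • (k x xb • gradient (fun y => Real.log (p y)) x
        + gradient (fun y => k y xb) x)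
      - (k x xb * q x) •
          (gradient (fun y => Real.log (p y)) x - gradient (fun y => Real.log (q y)) x)
      = gradient F x := by
    intro x
    rw [gradient_log_comp q hq_diff hq_pos x, hF,
      gradient_mul _ _ hk_diff hq_diff x]
    rw [smul_sub, smul_smul, mul_assoc, mul_inv_cancel₀ (hq_pos x).ne', mul_one]
    module
  have hFint : Integrable (fun x => gradient F x)
      (volume : Measure (EuclideanSpace ℝ (Fin d))) := by
    exact (h_int1.sub h_int2).congr (Filter.Eventually.of_forall fun x => key x)
  have hzero : (∫ x, gradient F x : EuclideanSpace ℝ (Fin d)) = 0 := by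
    ext i
    have h1 : (EuclideanSpace.proj i : EuclideanSpace ℝ (Fin d) →L[ℝ] ℝ)
        (∫ x, gradient F x) = ∫ x, (EuclideanSpace.proj i) (gradient F x) :=
      (ContinuousLinearMap.integral_comp_comm _ hFint).symm
    have h2 : (∫ x, (EuclideanSpace.proj i) (gradient F x)) = 0 := by
      have : ∀ x, (EuclideanSpace.proj i) (gradient F x)
          = fderiv ℝ F x (EuclideanSpace.single i 1) := fun x =>
        gradient_apply_coord F x i
      simp only [this]
      exact hk_stein i
    have := h1.trans h2
    simpa using this
  have := integral_sub h_int1 h_int2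
  rw [← sub_eq_zero, ← this]
  simp only [key]
  exact hzero
end

section
/- Let p, q : ℝᵈ → ℝ be differentiable probability densities with p(x) > 0 and q(x) > 0 for all x, with p and q continuous. Let k : ℝᵈ × ℝᵈ → ℝ be a symmetric kernel admitting a pointwise absolutely convergent expansion k(x, x') = ∑_j λ_j e_j(x) e_j(x') where λ_j > 0 for all j and (e_j)_{j∈ℕ} is an orthonormal Hilbert basis of L²(ℝᵈ) consisting of continuous functions. Assume: (i) for every x̄, the function x ↦ k(x, x̄) is differentiable, in the Stein class of both p and q (i.e. ∫ ∇_x(k(x, x̄)p(x)) dx = 0 and ∫ ∇_x(k(x, x̄)q(x)) dx = 0), (ii) the function g(x̄) := ∫_{ℝᵈ} ((∇ log p)(x) − (∇ log q)(x)) k(x, x̄) q(x) dx is well-defined (integrand integrable) and continuous in x̄, with term-by-term integration valid: g(x̄) = ∑_j λ_j e_j(x̄) B_j in L²(ℝᵈ), where B_j := ∫ ((∇ log p)(x) − (∇ log q)(x)) e_j(x) q(x) dx, (iii) each component of x ↦ ((∇ log p)(x) − (∇ log q)(x)) q(x) lies in L²(ℝᵈ), and (iv) ‖g‖² p is integrable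 with D(q‖p) := ∫_{ℝᵈ} ‖g(x̄)‖² p(x̄) dx̄ = 0. Then p = q. -/
open MeasureTheory


lemma aux_const_of_fderiv_ae_zero {d : ℕ} (f : EuclideanSpace ℝ (Fin d) → ℝ)
    (hf : Differentiable ℝ f)
    (h : ∀ᵐ x : EuclideanSpace ℝ (Fin d), fderiv ℝ f x = 0) :
    ∀ x, f x = f 0 := by
  classical
  set N : Set (EuclideanSpace ℝ (Fin d)) := {x | fderiv ℝ f x ≠ 0} with hNdef
  have hNmeas : MeasurableSet N :=
    (measurable_fderiv ℝ f (MeasurableSet.singleton 0)).compl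
  have hNnull : volume N = 0 := ae_iff.mp h
  intro v
  -- the set of pairs (x, t) such that x + t • v is a bad point
  set S : Set (EuclideanSpace ℝ (Fin d) × ℝ) := {p | p.1 + p.2 • v ∈ N} with hSdef
  have hm : Measurable (fun p : EuclideanSpace ℝ (Fin d) × ℝ => p.1 + p.2 • v) := by
    fun_prop
  have hSmeas : MeasurableSet S := hm hNmeas
  have hS'null : (volume : Measure ℝ).prod (volume : Measure (EuclideanSpace ℝ (Fin d)))
      (Prod.swap ⁻¹' S) = 0 := by
    rw [Measure.measure_prod_null (measurable_swap hSmeas)]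
    filter_upwards with t
    have h1 : (Prod.mk t ⁻¹' (Prod.swap ⁻¹' S)) =
        (fun x : EuclideanSpace ℝ (Fin d) => x + t • v) ⁻¹' N := rfl
    have h2 : (fun x : EuclideanSpace ℝ (Fin d) => x + t • v) ⁻¹' N =
        (fun x : EuclideanSpace ℝ (Fin d) => t • v + x) ⁻¹' N := by
      ext x; simp [add_comm]
    simp only [Pi.zero_apply, h1, h2]
    rw [measure_preimage_add]
    exact hNnull
  have hSnull : (volume : Measure (EuclideanSpace ℝ (Fin d))).prod (volume : Measure ℝ) S = 0 := by
    have hswap := Measure.prod_swap (μ := (volume : Measure ℝ))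
      (ν := (volume : Measure (EuclideanSpace ℝ (Fin d))))
    rw [← hswap, Measure.map_apply measurable_swap hSmeas]
    exact hS'null
  have hgood : ∀ᵐ x : EuclideanSpace ℝ (Fin d), ∀ᵐ t : ℝ, fderiv ℝ f (x + t • v) = 0 := by
    have hae := Measure.measure_ae_null_of_prod_null hSnull
    filter_upwards [hae] with x hx
    have h0 : volume {t : ℝ | x + t • v ∈ N} = 0 := hx
    have h1 : ∀ᵐ t : ℝ, x + t • v ∉ N := measure_eq_zero_iff_ae_notMem.mp h0
    filter_upwards [h1] with t ht
    simpa [hNdef] using ht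
  have key : ∀ᵐ x : EuclideanSpace ℝ (Fin d), f (x + v) = f x := by
    filter_upwards [hgood] with x hx
    set D : ℝ → ℝ := fun t => fderiv ℝ f (x + t • v) v with hDdef
    have hD0 : D =ᵐ[volume] 0 := by
      filter_upwards [hx] with t ht
      simp [hDdef, ht]
    have hder : ∀ t : ℝ, HasDerivAt (fun t : ℝ => f (x + t • v)) (D t) t := by
      intro t
      have h1 : HasDerivAt (fun t : ℝ => x + t • v) v t := by
        simpa using ((hasDerivAt_id t).smul_const v).const_add x
      have := (hf.differentiableAt.hasFDerivAt).comp_hasDerivAt t h1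
      exact this
    have hint : IntervalIntegrable D volume 0 1 :=
      ((integrable_zero _ _ _).congr hD0.symm).intervalIntegrable
    have heq : ∫ t in (0:ℝ)..1, D t = f (x + v) - f x := by
      have := intervalIntegral.integral_eq_sub_of_hasDerivAt
        (f := fun t : ℝ => f (x + t • v)) (f' := D) (fun t _ => hder t) hint
      simpa using this
    have hzero : ∫ t in (0:ℝ)..1, D t = 0 := by
      rw [intervalIntegral.integral_congr_ae (g := fun _ => (0:ℝ))
        (by filter_upwards [hD0] with t ht _ using ht)]
      simp
    have := heq.symm.trans hzero
    linarith [this]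
  have key' : (fun x => f (x + v)) =ᵐ[(volume : Measure (EuclideanSpace ℝ (Fin d)))] f := key
  have heq : (fun x => f (x + v)) = f := by
    refine (Continuous.ae_eq_iff_eq volume ?_ hf.continuous).mp key'
    exact hf.continuous.comp (by fun_prop)
  have h0 := congrFun heq 0
  simpa using h0


/-- **Proposition 2 (reverse direction).** Let `p, q` be continuous, differentiable,
everywhere positive probability densities on `ℝᵈ`, and let `k` be a symmetric kernel
with a pointwise (absolutely, i.e. unconditionally) convergent Mercer expansion
`k x x' = ∑ j, λ j * e j x * e j x'` with `λ j > 0` and `(e j)` a continuous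
orthonormal Hilbert basis of `L²(ℝᵈ)`.  Assume each kernel section `x ↦ k x x̄` is
differentiable and in the Stein class of both `p` and `q`; that
`g x̄ = ∫ ((∇ log p) x − (∇ log q) x) k x x̄ q x dx` is well defined, continuous, and
admits the term-by-term `L²` expansion `g = ∑ j, (λ j * B j) • e j` componentwise,
where `B j = ∫ ((∇ log p) x − (∇ log q) x) e j x q x dx`; that each component of
`(∇ log p − ∇ log q) * q` lies in `L²`; and that the Stein discrepancy
`D(q‖p) = ∫ ‖g x̄‖² p x̄ dx̄` vanishes (integrand integrable).  Then `p = q`. -/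
theorem eq_of_stein_discrepancy_eq_zero {d : ℕ}
    (p q : EuclideanSpace ℝ (Fin d) → ℝ)
    (k : EuclideanSpace ℝ (Fin d) → EuclideanSpace ℝ (Fin d) → ℝ)
    (hp_diff : Differentiable ℝ p) (hp_cont : Continuous p) (hp_pos : ∀ x, 0 < p x)
    (hp_int : Integrable p (volume : Measure (EuclideanSpace ℝ (Fin d))))
    (hp_one : ∫ x, p x = 1)
    (hq_diff : Differentiable ℝ q) (hq_cont : Continuous q) (hq_pos : ∀ x, 0 < q x)
    (hq_int : Integrable q (volume : Measure (EuclideanSpace ℝ (Fin d))))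
    (hq_one : ∫ x, q x = 1)
    -- the kernel is symmetric
    (hk_symm : ∀ x x', k x x' = k x' x)
    -- Mercer-type expansion: positive eigenvalues, continuous orthonormal Hilbert basis
    (lam : ℕ → ℝ) (hlam : ∀ j, 0 < lam j)
    (e : ℕ → EuclideanSpace ℝ (Fin d) → ℝ)
    (he_cont : ∀ j, Continuous (e j))
    (he_mem : ∀ j, MemLp (e j) 2 (volume : Measure (EuclideanSpace ℝ (Fin d))))
    (he_on : Orthonormal ℝ (fun j => (he_mem j).toLp (e j)))
    (he_complete : ∀ f : Lp ℝ 2 (volume : Measure (EuclideanSpace ℝ (Fin d))),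
      (∀ j, inner ℝ ((he_mem j).toLp (e j)) f = (0 : ℝ)) → f = 0)
    -- pointwise absolutely convergent expansion of the kernel
    (hk_mercer : ∀ x x', HasSum (fun j => lam j * (e j x * e j x')) (k x x'))
    -- (i) each kernel section is differentiable and in the Stein class of `p` and of `q`
    (hk_diff : ∀ xb, Differentiable ℝ (fun x => k x xb))
    (hk_int_p : ∀ xb, ∀ i : Fin d,
      Integrable (fun x => fderiv ℝ (fun y => k y xb * p y) x (EuclideanSpace.single i 1))
        (volume : Measure (EuclideanSpace ℝ (Fin d))))
    (hk_stein_p : ∀ xb, ∀ i : Fin d,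
      ∫ x, fderiv ℝ (fun y => k y xb * p y) x (EuclideanSpace.single i 1) = 0)
    (hk_int_q : ∀ xb, ∀ i : Fin d,
      Integrable (fun x => fderiv ℝ (fun y => k y xb * q y) x (EuclideanSpace.single i 1))
        (volume : Measure (EuclideanSpace ℝ (Fin d))))
    (hk_stein_q : ∀ xb, ∀ i : Fin d,
      ∫ x, fderiv ℝ (fun y => k y xb * q y) x (EuclideanSpace.single i 1) = 0)
    -- (ii) the function `g` and the coefficients `B`
    (g : EuclideanSpace ℝ (Fin d) → EuclideanSpace ℝ (Fin d))
    (B : ℕ → EuclideanSpace ℝ (Fin d))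
    (hg_int : ∀ xb, Integrable
      (fun x => (k x xb * q x) •
        (gradient (fun y => Real.log (p y)) x - gradient (fun y => Real.log (q y)) x))
      (volume : Measure (EuclideanSpace ℝ (Fin d))))
    (hg_def : ∀ xb, g xb = ∫ x, (k x xb * q x) •
      (gradient (fun y => Real.log (p y)) x - gradient (fun y => Real.log (q y)) x))
    (hg_cont : Continuous g)
    (hB_def : ∀ j, B j = ∫ x, (e j x * q x) •
      (gradient (fun y => Real.log (p y)) x - gradient (fun y => Real.log (q y)) x))
    (hg_mem : ∀ i : Fin d,
      MemLp (fun xb => g xb i) 2 (volume : Measure (EuclideanSpace ℝ (Fin d))))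
    -- term-by-term integration: `g = ∑ j, (λ j * B j) • e j` in `L²`, componentwise
    (hg_sum : ∀ i : Fin d,
      HasSum (fun j => (lam j * B j i) • (he_mem j).toLp (e j)) ((hg_mem i).toLp _))
    -- (iii) each component of `(∇ log p − ∇ log q) * q` is square integrable
    (h_score_mem : ∀ i : Fin d,
      MemLp (fun x => q x *
          (gradient (fun y => Real.log (p y)) x - gradient (fun y => Real.log (q y)) x) i)
        2 (volume : Measure (EuclideanSpace ℝ (Fin d))))
    -- (iv) the Stein discrepancy vanishes
    (hD_int : Integrable (fun xb => ‖g xb‖ ^ 2 * p xb)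
      (volume : Measure (EuclideanSpace ℝ (Fin d))))
    (hD_zero : ∫ xb, ‖g xb‖ ^ 2 * p xb = 0) :
    ∀ x, p x = q x := by
  classical
  set D : EuclideanSpace ℝ (Fin d) → EuclideanSpace ℝ (Fin d) :=
    fun x => gradient (fun y => Real.log (p y)) x - gradient (fun y => Real.log (q y)) x
    with hDdef
  have hDx : ∀ x, gradient (fun y => Real.log (p y)) x
      - gradient (fun y => Real.log (q y)) x = D x := fun _ => rfl
  simp only [hDx] at hB_def h_score_mem
  -- Step A : the Stein discrepancy vanishes pointwise, hence `g = 0` everywhere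
  have hg0 : ∀ xb, g xb = 0 := by
    have hnn : 0 ≤ᵐ[(volume : Measure (EuclideanSpace ℝ (Fin d)))]
        fun xb => ‖g xb‖ ^ 2 * p xb :=
      Filter.Eventually.of_forall fun xb => mul_nonneg (by positivity) (hp_pos xb).le
    have hae : (fun xb => ‖g xb‖ ^ 2 * p xb)
        =ᵐ[(volume : Measure (EuclideanSpace ℝ (Fin d)))] 0 :=
      (integral_eq_zero_iff_of_nonneg_ae hnn hD_int).mp hD_zero
    have hcont : Continuous fun xb => ‖g xb‖ ^ 2 * p xb := ((hg_cont.norm.pow 2).mul hp_cont)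
    have heq : (fun xb => ‖g xb‖ ^ 2 * p xb) = 0 :=
      (Continuous.ae_eq_iff_eq volume hcont continuous_const).mp hae
    intro xb
    have h2 : ‖g xb‖ ^ 2 * p xb = 0 := congrFun heq xb
    have h3 : ‖g xb‖ ^ 2 = 0 := by
      rcases mul_eq_zero.mp h2 with h | h
      · exact h
      · exact absurd h (hp_pos xb).ne'
    have h4 : ‖g xb‖ = 0 := pow_eq_zero_iff (two_ne_zero) |>.mp h3
    exact norm_eq_zero.mp h4
  -- Step B : the `L²` representative of each component of `g` is `0`
  have hgLp0 : ∀ i : Fin d, (hg_mem i).toLp (fun xb => g xb i) = 0 := by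
    intro i
    have hz : (fun xb => g xb i) =ᵐ[(volume : Measure (EuclideanSpace ℝ (Fin d)))]
        (0 : EuclideanSpace ℝ (Fin d) → ℝ) := by
      filter_upwards with xb
      simp [hg0 xb]
    rw [MemLp.toLp_congr (hg_mem i) MemLp.zero hz]
    exact MemLp.toLp_zero _
  -- Step C : all coefficients `lam j * B j i` vanish, hence `B j = 0`
  have hB0 : ∀ j, B j = 0 := by
    have hcoeff : ∀ (i : Fin d) (m : ℕ), lam m * B m i = 0 := by
      intro i m
      have hs := hg_sum i
      rw [hgLp0 i] at hs
      have h2 := hs.mapL (innerSL ℝ ((he_mem m).toLp (e m)))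
      simp only [map_zero] at h2
      have h3 : (fun j => (innerSL ℝ ((he_mem m).toLp (e m)))
          ((lam j * B j i) • (he_mem j).toLp (e j)))
          = fun j => if j = m then lam m * B m i else 0 := by
        funext j
        have hip := orthonormal_iff_ite.mp he_on m j
        by_cases hjm : j = m
        · subst hjm
          rw [innerSL_apply_apply, real_inner_smul_right, hip]
          simp
        · simp [real_inner_smul_right, hip, Ne.symm hjm, hjm]
      rw [h3] at h2
      exact ((hasSum_ite_eq m (lam m * B m i)).unique h2)
    intro j
    refine PiLp.ext fun i => ?_
    have h := hcoeff i j
    rcases mul_eq_zero.mp h with h' | h'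
    · exact absurd h' (hlam j).ne'
    · simpa using h'
  -- integrability of the products `e j * (q * D · i)` (both factors are in L²)
  have hprod : ∀ (j : ℕ) (i' : Fin d),
      Integrable (fun x => e j x * (q x * D x i'))
        (volume : Measure (EuclideanSpace ℝ (Fin d))) := by
    intro j i'
    have h1 := L2.integrable_inner (𝕜 := ℝ) ((he_mem j).toLp (e j)) ((h_score_mem i').toLp _)
    refine h1.congr ?_
    filter_upwards [MemLp.coeFn_toLp (he_mem j), MemLp.coeFn_toLp (h_score_mem i')]
      with x hx1 hx2
    simp [hx1, hx2, RCLike.inner_apply]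
    ring
  -- integrability of the vector-valued integrand
  have hFint : ∀ j : ℕ, Integrable (fun x => (e j x * q x) • D x)
      (volume : Measure (EuclideanSpace ℝ (Fin d))) := by
    intro j
    have hrepr : (fun x => (e j x * q x) • D x)
        = fun x => ∑ i' : Fin d, (e j x * (q x * D x i')) • EuclideanSpace.single i' (1:ℝ) := by
      funext x
      refine PiLp.ext fun i'' => ?_
      have hsum : (∑ i' : Fin d, (e j x * (q x * D x i')) • EuclideanSpace.single i' (1:ℝ)) i''
          = ∑ i' : Fin d, ((e j x * (q x * D x i')) • EuclideanSpace.single i' (1:ℝ)) i'' :=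
        by rw [WithLp.ofLp_sum, Finset.sum_apply]
      rw [hsum]
      simp [EuclideanSpace.single_apply, PiLp.smul_apply, mul_assoc]
    rw [hrepr]
    exact integrable_finset_sum _ fun i' _ => ((hprod j i').smul_const _)
  -- the components of `B j` are the integrals of the components
  have hBcomp : ∀ (j : ℕ) (i' : Fin d), B j i' = ∫ x, e j x * (q x * D x i') := by
    intro j i'
    have h1 : B j i' = (∫ x, (e j x * q x) • D x) i' := by rw [hB_def j]
    rw [h1]
    calc (∫ x, (e j x * q x) • D x) i'
        = EuclideanSpace.proj (𝕜 := ℝ) i' (∫ x, (e j x * q x) • D x) := rfl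
      _ = ∫ x, EuclideanSpace.proj (𝕜 := ℝ) i' ((e j x * q x) • D x) :=
          (ContinuousLinearMap.integral_comp_comm _ (hFint j)).symm
      _ = ∫ x, e j x * (q x * D x i') := by
          congr 1
          funext x
          simp [PiLp.smul_apply, mul_assoc]
  -- the score function `q * D` vanishes a.e., componentwise
  have hsLp0 : ∀ i : Fin d,
      (fun x => q x * D x i) =ᵐ[(volume : Measure (EuclideanSpace ℝ (Fin d)))] 0 := by
    intro i
    have hinner0 : ∀ j : ℕ,
        inner ℝ ((he_mem j).toLp (e j)) ((h_score_mem i).toLp _) = (0:ℝ) := by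
      intro j
      have h1 : inner ℝ ((he_mem j).toLp (e j)) ((h_score_mem i).toLp _)
          = ∫ x, e j x * (q x * D x i) := by
        rw [L2.inner_def]
        refine integral_congr_ae ?_
        filter_upwards [MemLp.coeFn_toLp (he_mem j), MemLp.coeFn_toLp (h_score_mem i)]
          with x hx1 hx2
        simp [hx1, hx2, RCLike.inner_apply]
        ring
      rw [h1, ← hBcomp j i, hB0 j]
      simp
    have hzero := he_complete _ hinner0
    have hco := MemLp.coeFn_toLp (h_score_mem i)
    rw [hzero] at hco
    exact hco.symm.trans (Lp.coeFn_zero _ _ _)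
  -- hence `D = 0` a.e.
  have hDae : ∀ᵐ x : EuclideanSpace ℝ (Fin d) ∂(volume), D x = 0 := by
    have hall := ae_all_iff.mpr hsLp0
    filter_upwards [hall] with x hx
    refine PiLp.ext fun i => ?_
    have h := hx i
    have h' : q x * D x i = 0 := h
    rcases mul_eq_zero.mp h' with h'' | h''
    · exact absurd h'' (hq_pos x).ne'
    · simpa using h''
  -- the difference of the log-densities has a.e. vanishing derivative
  set G : EuclideanSpace ℝ (Fin d) → ℝ := fun y => Real.log (p y) - Real.log (q y) with hGdef
  have hlp : Differentiable ℝ fun y => Real.log (p y) := fun x =>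
    (Real.differentiableAt_log (hp_pos x).ne').comp x (hp_diff x)
  have hlq : Differentiable ℝ fun y => Real.log (q y) := fun x =>
    (Real.differentiableAt_log (hq_pos x).ne').comp x (hq_diff x)
  have hGdiff : Differentiable ℝ G := hlp.sub hlq
  have hfd : ∀ᵐ x : EuclideanSpace ℝ (Fin d), fderiv ℝ G x = 0 := by
    filter_upwards [hDae] with x hx
    have h1 : fderiv ℝ G x = fderiv ℝ (fun y => Real.log (p y)) x
        - fderiv ℝ (fun y => Real.log (q y)) x := fderiv_sub (hlp x) (hlq x)
    have h2 : D x = (InnerProductSpace.toDual ℝ (EuclideanSpace ℝ (Fin d))).symm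
        (fderiv ℝ G x) := by
      rw [h1, map_sub]
      rfl
    have h3 : (InnerProductSpace.toDual ℝ (EuclideanSpace ℝ (Fin d))).symm
        (fderiv ℝ G x) = 0 := by rw [← h2, hx]
    simpa using (LinearIsometryEquiv.map_eq_zero_iff _).mp h3
  have hconst := aux_const_of_fderiv_ae_zero G hGdiff hfd
  -- hence `p = c • q` with `c = p 0 / q 0`
  have hratio : ∀ x, p x = (p 0 / q 0) * q x := by
    intro x
    have h := hconst x
    simp only [hGdef] at h
    have hlog : Real.log (p x) = Real.log ((p 0 / q 0) * q x) := by
      rw [Real.log_mul (div_pos (hp_pos 0) (hq_pos 0)).ne' (hq_pos x).ne',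
        Real.log_div (hp_pos 0).ne' (hq_pos 0).ne']
      linarith
    calc p x = Real.exp (Real.log (p x)) := (Real.exp_log (hp_pos x)).symm
      _ = Real.exp (Real.log ((p 0 / q 0) * q x)) := by rw [hlog]
      _ = (p 0 / q 0) * q x := Real.exp_log (mul_pos (div_pos (hp_pos 0) (hq_pos 0)) (hq_pos x))
  have hc1 : (p 0 / q 0) = 1 := by
    have hint : ∫ x, p x = ∫ x, (p 0 / q 0) * q x := by
      congr 1
      funext x
      exact hratio x
    rw [hp_one, integral_const_mul, hq_one, mul_one] at hint
    exact hint.symm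
  intro x
  rw [hratio x, hc1, one_mul]
end
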